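/- Under the ansatz v(y) = A·ln(1+y) + B substituted into the exploratory HJB equation (1/2)σ_Z²κ²(y+1)²v'' + √(1-κ²)ζ(y+1)v' + γln(√((2πγ)^d/(|det(σσᵀ)|(-v'')^d))) - α(v')²/v'' = ρv with boundary condition v'(0) = 1, the equation holds for all y > 0 if and only if A = 1, γ = ρ/d, and B = (1/ρ)(-(1/2)σ_Z²κ² + √(1-κ²)ζ + (γ/2)ln((2πγ)^d/|det(σσᵀ)|) + α). -/

import Mathlib

open Real Matrix

lemma hjb_aux {d : ℕ} (γ σZ κ α ζ D : ℝ) (hγ : 0 < γ) (hD : 0 < D)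
    (y : ℝ) (hy : 0 < y) :
    (1 / 2) * σZ ^ 2 * κ ^ 2 * (y + 1) ^ 2 * (-((1:ℝ) / (1 + y) ^ 2))
      + Real.sqrt (1 - κ ^ 2) * ζ * (y + 1) * ((1:ℝ) / (1 + y))
      + γ * Real.log (Real.sqrt ((2 * π * γ) ^ d / (D * ((1:ℝ) / (1 + y) ^ 2) ^ d)))
      - α * ((1:ℝ) / (1 + y)) ^ 2 / (-((1:ℝ) / (1 + y) ^ 2))
    = -(1 / 2) * σZ ^ 2 * κ ^ 2 + Real.sqrt (1 - κ ^ 2) * ζ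
      + γ * (d : ℝ) * Real.log (1 + y)
      + (γ / 2) * Real.log ((2 * π * γ) ^ d / D) + α := by
  have h1 : (0:ℝ) < 1 + y := by linarith
  have hπ : (0:ℝ) < π := Real.pi_pos
  have hXeq : (2 * π * γ) ^ d / (D * ((1:ℝ) / (1 + y) ^ 2) ^ d)
      = ((2 * π * γ) ^ d / D) * ((1 + y) ^ 2) ^ d := by
    rw [div_pow, one_pow]
    field_simp
  have hlog : Real.log (Real.sqrt ((2 * π * γ) ^ d / (D * ((1:ℝ) / (1 + y) ^ 2) ^ d)))
      = Real.log ((2 * π * γ) ^ d / D) / 2 + (d : ℝ) * Real.log (1 + y) := by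
    rw [hXeq, Real.log_sqrt (by positivity),
      Real.log_mul (by positivity) (by positivity), ← pow_mul, Real.log_pow]
    push_cast
    ring
  rw [hlog]
  field_simp
  ring

/-- Under the ansatz v(y) = A·ln(1+y) + B, the exploratory HJB equation
(with v'(y) = A/(1+y), v''(y) = -A/(1+y)²) together with the Neumann condition v'(0) = 1
holds for all y > 0 if and only if A = 1, γ = ρ/d and
B = (1/ρ)(-(1/2)σ_Z²κ² + √(1-κ²)ζ + (γ/2)ln((2πγ)^d/|det(σσᵀ)|) + α). -/
theorem ansatz_solves_exploratory_HJB_iff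
    {d : ℕ} (hd : 1 ≤ d) (ρ γ σZ κ α ζ A B : ℝ)
    (σ : Matrix (Fin d) (Fin d) ℝ) (hσ : IsUnit σ.det)
    (hρ : 0 < ρ) (hγ : 0 < γ) (hα : 0 < α) (hσZ : 0 < σZ) (hκ : κ ∈ Set.Icc (-1 : ℝ) 1) :
    ((∀ y > (0 : ℝ),
        (1 / 2) * σZ ^ 2 * κ ^ 2 * (y + 1) ^ 2 * (-(A / (1 + y) ^ 2))
          + Real.sqrt (1 - κ ^ 2) * ζ * (y + 1) * (A / (1 + y))
          + γ * Real.log (Real.sqrt ((2 * π * γ) ^ d / (|(σ * σᵀ).det| * (A / (1 + y) ^ 2) ^ d)))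
          - α * (A / (1 + y)) ^ 2 / (-(A / (1 + y) ^ 2))
          = ρ * (A * Real.log (1 + y) + B)) ∧
      A / (1 + (0 : ℝ)) = 1)
    ↔ (A = 1 ∧ γ = ρ / d ∧
        B = (1 / ρ) * (-(1 / 2) * σZ ^ 2 * κ ^ 2 + Real.sqrt (1 - κ ^ 2) * ζ
          + (γ / 2) * Real.log ((2 * π * γ) ^ d / |(σ * σᵀ).det|) + α)) := by
  have hdne : ((d : ℝ)) ≠ 0 := by
    have : (0:ℕ) < d := hd
    exact_mod_cast this.ne'
  have hD : (0:ℝ) < |(σ * σᵀ).det| := by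
    have h0 : σ.det ≠ 0 := isUnit_iff_ne_zero.mp hσ
    have : (σ * σᵀ).det ≠ 0 := by
      rw [Matrix.det_mul, Matrix.det_transpose]
      exact mul_ne_zero h0 h0
    exact abs_pos.mpr this
  set D := |(σ * σᵀ).det| with hDdef
  constructor
  · rintro ⟨heq, hA0⟩
    have hA : A = 1 := by simpa using hA0
    subst hA
    refine ⟨rfl, ?_, ?_⟩ <;>
    · have hy1 : (0:ℝ) < Real.exp 1 - 1 := by
        have := Real.exp_one_gt_d9; linarith
      have hy2 : (0:ℝ) < Real.exp 2 - 1 := by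
        have h1 := Real.exp_one_gt_d9
        have h2 : Real.exp 1 ≤ Real.exp 2 := Real.exp_le_exp.mpr (by norm_num)
        linarith
      have e1 := heq _ hy1
      have e2 := heq _ hy2
      rw [hjb_aux γ σZ κ α ζ D hγ hD _ hy1] at e1
      rw [hjb_aux γ σZ κ α ζ D hγ hD _ hy2] at e2
      have r1 : (1:ℝ) + (Real.exp 1 - 1) = Real.exp 1 := by ring
      have r2 : (1:ℝ) + (Real.exp 2 - 1) = Real.exp 2 := by ring
      rw [r1, Real.log_exp] at e1
      rw [r2, Real.log_exp] at e2
      ring_nf at e1 e2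
      have hγρ : γ * (d:ℝ) = ρ := by linarith
      first
      | (field_simp
         ring_nf
         linarith [e1, e2, hγρ])
      | linarith [hγρ]
  · rintro ⟨hA, hγd, hB⟩
    subst hA
    refine ⟨?_, by norm_num⟩
    intro y hy
    rw [hjb_aux γ σZ κ α ζ D hγ hD y hy, hB]
    have hγρ : γ * (d:ℝ) = ρ := by rw [hγd]; field_simp
    have hρB : ρ * ((1 / ρ) * (-(1 / 2) * σZ ^ 2 * κ ^ 2 + Real.sqrt (1 - κ ^ 2) * ζ
          + (γ / 2) * Real.log ((2 * π * γ) ^ d / D) + α))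
        = -(1 / 2) * σZ ^ 2 * κ ^ 2 + Real.sqrt (1 - κ ^ 2) * ζ
          + (γ / 2) * Real.log ((2 * π * γ) ^ d / D) + α := by
      field_simp
    rw [mul_add, hρB, one_mul]
    have hl : γ * (d:ℝ) * Real.log (1+y) = ρ * Real.log (1+y) := by rw [hγρ]
    linarith
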